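/- Let n ≥ 3 be an integer, α a real number with 0 ≤ α < 1/n, and δ ≥ 1 an odd integer. Then σ5 ≥ σ4 ≥ σ2 ≥ σ3 ≥ σ1, and n·σ5 ≤ σ3·(2n − n²) − n·σ1 + n. (The odd-δ case of the remark following Corollary 2: for 0 ≤ α < 1/n the converse bound 1/R^O = nσ5 is below the achievable bound 1/R^I = σ3(2n − n²) − nσ1 + n.) -/
import Mathlib


open Finset

/-- `σ1 = α((n−1)^δ + (n−1)(nα−1)^δ)/((n−1)^δ + (nα−1)^{δ+1})`. -/
noncomputable def sig1 (n : ℕ) (α : ℝ) (δ : ℕ) : ℝ :=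
  α * (((n : ℝ) - 1) ^ δ + ((n : ℝ) - 1) * ((n : ℝ) * α - 1) ^ δ) /
    (((n : ℝ) - 1) ^ δ + ((n : ℝ) * α - 1) ^ (δ + 1))

/-- `σ2 = (1−α)((n−1)^δ + (n−1)(nα−1)^δ)/((n−1)^{δ+1} − (nα−1)^{δ+1})`. -/
noncomputable def sig2 (n : ℕ) (α : ℝ) (δ : ℕ) : ℝ :=
  (1 - α) * (((n : ℝ) - 1) ^ δ + ((n : ℝ) - 1) * ((n : ℝ) * α - 1) ^ δ) /
    (((n : ℝ) - 1) ^ (δ + 1) - ((n : ℝ) * α - 1) ^ (δ + 1))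

/-- `σ3 = α((n−1)^{δ+1} − (n−1)(nα−1)^δ)/((n−1)^{δ+1} − (nα−1)^{δ+1})`. -/
noncomputable def sig3 (n : ℕ) (α : ℝ) (δ : ℕ) : ℝ :=
  α * (((n : ℝ) - 1) ^ (δ + 1) - ((n : ℝ) - 1) * ((n : ℝ) * α - 1) ^ δ) /
    (((n : ℝ) - 1) ^ (δ + 1) - ((n : ℝ) * α - 1) ^ (δ + 1))

/-- `σ4 = (1−α)((n−1)^δ − (nα−1)^δ)/((n−1)((n−1)^δ + (nα−1)^{δ+1}))`. -/
noncomputable def sig4 (n : ℕ) (α : ℝ) (δ : ℕ) : ℝ :=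
  (1 - α) * (((n : ℝ) - 1) ^ δ - ((n : ℝ) * α - 1) ^ δ) /
    (((n : ℝ) - 1) * (((n : ℝ) - 1) ^ δ + ((n : ℝ) * α - 1) ^ (δ + 1)))

/-- `σ5 = (1−α)((n−1)^δ − (nα−1)^δ)/((n−1)^{δ+1} − (nα−1)^{δ+1})`. -/
noncomputable def sig5 (n : ℕ) (α : ℝ) (δ : ℕ) : ℝ :=
  (1 - α) * (((n : ℝ) - 1) ^ δ - ((n : ℝ) * α - 1) ^ δ) /
    (((n : ℝ) - 1) ^ (δ + 1) - ((n : ℝ) * α - 1) ^ (δ + 1))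

set_option maxHeartbeats 1000000 in
private lemma key (N t A B : ℝ) (hN : 2 ≤ N) (ht0 : t < 0) (ht1 : -1 ≤ t)
    (hA : N ≤ A) (hB0 : B < 0) (hB1 : -1 ≤ B) (hNB : t * A ≤ N * B) :
    ((N - t) * (A - B) / ((N + 1) * (N * (A + t * B))) ≤
      (N - t) * (A - B) / ((N + 1) * (N * A - t * B)) ∧
     (N - t) * (A + N * B) / ((N + 1) * (N * A - t * B)) ≤
      (N - t) * (A - B) / ((N + 1) * (N * (A + t * B))) ∧
     (t + 1) * (N * A - N * B) / ((N + 1) * (N * A - t * B)) ≤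
      (N - t) * (A + N * B) / ((N + 1) * (N * A - t * B)) ∧
     (t + 1) * (A + N * B) / ((N + 1) * (A + t * B)) ≤
      (t + 1) * (N * A - N * B) / ((N + 1) * (N * A - t * B))) ∧
    (N + 1) * ((N - t) * (A - B) / ((N + 1) * (N * A - t * B))) ≤
      (t + 1) * (N * A - N * B) / ((N + 1) * (N * A - t * B)) *
          (2 * (N + 1) - (N + 1) ^ 2) -
        (N + 1) * ((t + 1) * (A + N * B) / ((N + 1) * (A + t * B))) + (N + 1) := by
  have hC : 0 < t * B := mul_pos_of_neg_of_neg ht0 hB0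
  have hA1 : (1 : ℝ) ≤ A := by linarith
  have hC1 : t * B ≤ 1 := by nlinarith [mul_nonneg (by linarith : (0:ℝ) ≤ t + 1) (by linarith : (0:ℝ) ≤ -B)]
  have hE : 0 < A + t * B := by linarith
  have hD : 0 < N * A - t * B := by nlinarith
  have hnt : 0 < N - t := by linarith
  have htp : 0 ≤ t + 1 := by linarith
  have hN1 : (0:ℝ) < N + 1 := by linarith
  have hAB : 0 < A - B := by linarith
  have hd5 : 0 < (N + 1) * (N * A - t * B) := by positivity
  have hd4 : 0 < (N + 1) * (N * (A + t * B)) := by positivity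
  have hd1 : 0 < (N + 1) * (A + t * B) := by positivity
  refine ⟨⟨?_, ?_, ?_, ?_⟩, ?_⟩
  · rw [div_le_div_iff₀ hd4 hd5]
    have h : 0 ≤ (N - t) * (A - B) * ((N + 1) * (N + 1)) * (t * B) := by positivity
    nlinarith [h]
  · rw [div_le_div_iff₀ hd5 hd4]
    have h1 : 0 ≤ A * (N + t) + (N - 1) * (t * B) := by nlinarith
    have h : 0 ≤ (N - t) * ((N + 1) * (N + 1)) * (-B) * (A * (N + t) + (N - 1) * (t * B)) := by
      apply mul_nonneg (mul_nonneg (mul_nonneg hnt.le (by positivity)) (by linarith)) h1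
    nlinarith [h]
  · rw [div_le_div_iff₀ hd5 hd5]
    have h : 0 ≤ (N + 1) * (N * B - t * A) := mul_nonneg hN1.le (by linarith)
    nlinarith [h, mul_nonneg (mul_nonneg hN1.le (by linarith : (0:ℝ) ≤ N * B - t * A)) hd5.le]
  · rw [div_le_div_iff₀ hd1 hd5]
    have h : 0 ≤ (t + 1) * ((N + 1) * (N + 1)) * A * ((t - N) * B) := by
      apply mul_nonneg (mul_nonneg (mul_nonneg htp (by positivity)) (by positivity))
      exact (mul_pos_of_neg_of_neg (by linarith) hB0).le
    nlinarith [h]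
  · have hb : A * (1 - N ^ 2) + B * (2 * t - N + N * t - N ^ 2 - N ^ 2 * t) ≤ 0 := by
      have hK0 : 0 ≤ N ^ 2 - N - 2 := by nlinarith
      have h1 : 0 ≤ (1 + B) * (N + N ^ 2 + t * (N ^ 2 - N - 2)) := by
        apply mul_nonneg (by linarith)
        nlinarith [mul_nonneg htp hK0]
      have h4 : t * (N ^ 2 - N - 2) ≤ 0 := mul_nonpos_of_nonpos_of_nonneg ht0.le hK0
      have h2 : 0 ≤ (A - N) * (N ^ 2 - 1) := mul_nonneg (by linarith) (by nlinarith)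
      have h3 : 0 ≤ N * (N - 2) * (N + 1) :=
        mul_nonneg (mul_nonneg (by linarith) (by linarith)) (by linarith)
      nlinarith [h1, h2, h3, h4]
    have Hprod : 0 ≤ (-t) * (A - B) *
        (-(A * (1 - N ^ 2) + B * (2 * t - N + N * t - N ^ 2 - N ^ 2 * t))) :=
      mul_nonneg (mul_nonneg (by linarith) hAB.le) (by linarith)
    have Hexpr : 0 ≤ (t + 1) * N * (1 - N) * (A - B) * (A + t * B)
        - (t + 1) * (A + N * B) * (N * A - t * B)
        + (N + 1) * (N * A - t * B) * (A + t * B)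
        - (N - t) * (A - B) * (A + t * B) := by
      have hEq : (t + 1) * N * (1 - N) * (A - B) * (A + t * B)
          - (t + 1) * (A + N * B) * (N * A - t * B)
          + (N + 1) * (N * A - t * B) * (A + t * B)
          - (N - t) * (A - B) * (A + t * B)
          = (-t) * (A - B) *
            (-(A * (1 - N ^ 2) + B * (2 * t - N + N * t - N ^ 2 - N ^ 2 * t))) := by ring
      linarith [Hprod, hEq.ge, hEq.le]
    have goal_eq : (t + 1) * (N * A - N * B) / ((N + 1) * (N * A - t * B)) *
          (2 * (N + 1) - (N + 1) ^ 2) -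
        (N + 1) * ((t + 1) * (A + N * B) / ((N + 1) * (A + t * B))) + (N + 1)
        - (N + 1) * ((N - t) * (A - B) / ((N + 1) * (N * A - t * B)))
        = ((t + 1) * N * (1 - N) * (A - B) * (A + t * B)
            - (t + 1) * (A + N * B) * (N * A - t * B)
            + (N + 1) * (N * A - t * B) * (A + t * B)
            - (N - t) * (A - B) * (A + t * B)) / ((N * A - t * B) * (A + t * B)) := by
      field_simp
      ring
    have : 0 ≤ ((t + 1) * N * (1 - N) * (A - B) * (A + t * B)
            - (t + 1) * (A + N * B) * (N * A - t * B)
            + (N + 1) * (N * A - t * B) * (A + t * B)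
            - (N - t) * (A - B) * (A + t * B)) / ((N * A - t * B) * (A + t * B)) :=
      div_nonneg Hexpr (by positivity)
    linarith [goal_eq, this]


set_option maxHeartbeats 1600000 in
/-- **Odd-`δ` case of the remark following Corollary 2.** For `n ≥ 3`, `0 ≤ α < 1/n`
and odd `δ ≥ 1`: `σ5 ≥ σ4 ≥ σ2 ≥ σ3 ≥ σ1` and `n·σ5 ≤ σ3·(2n − n²) − n·σ1 + n`. -/
theorem remark_odd_delta (n δ : ℕ) (hn : 3 ≤ n) (hδ : 1 ≤ δ) (hδodd : Odd δ)
    (α : ℝ) (hα0 : 0 ≤ α) (hα1 : α < 1 / (n : ℝ)) :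
    (sig5 n α δ ≥ sig4 n α δ ∧ sig4 n α δ ≥ sig2 n α δ ∧ sig2 n α δ ≥ sig3 n α δ ∧
      sig3 n α δ ≥ sig1 n α δ) ∧
    (n : ℝ) * sig5 n α δ ≤
      sig3 n α δ * (2 * (n : ℝ) - (n : ℝ) ^ 2) - (n : ℝ) * sig1 n α δ + (n : ℝ) := by
  have hn3 : (3 : ℝ) ≤ (n : ℝ) := by exact_mod_cast hn
  have hnpos : (0 : ℝ) < (n : ℝ) := by linarith
  have hN : (2 : ℝ) ≤ (n : ℝ) - 1 := by linarith
  have hα1' : α * (n : ℝ) < 1 := (lt_div_iff₀ hnpos).mp hα1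
  have ht0 : (n : ℝ) * α - 1 < 0 := by nlinarith
  have ht1 : (-1 : ℝ) ≤ (n : ℝ) * α - 1 := by nlinarith [mul_nonneg hnpos.le hα0]
  have hA : ((n : ℝ) - 1) ≤ ((n : ℝ) - 1) ^ δ := le_self_pow₀ (by linarith) (by omega)
  have hB0 : ((n : ℝ) * α - 1) ^ δ < 0 := hδodd.pow_neg ht0
  have habs : |((n : ℝ) * α - 1) ^ δ| ≤ 1 := by
    rw [abs_pow]
    exact pow_le_one₀ (abs_nonneg _) (abs_le.mpr ⟨ht1, by linarith⟩)
  have hB1 : (-1 : ℝ) ≤ ((n : ℝ) * α - 1) ^ δ := by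
    have := neg_abs_le (((n : ℝ) * α - 1) ^ δ); linarith
  have hNB : ((n : ℝ) * α - 1) * ((n : ℝ) - 1) ^ δ ≤
      ((n : ℝ) - 1) * ((n : ℝ) * α - 1) ^ δ := by
    obtain ⟨k, hk⟩ := hδodd
    subst hk
    rw [pow_succ, pow_succ]
    have hX : (1 : ℝ) ≤ ((n : ℝ) - 1) ^ (2 * k) := one_le_pow₀ (by linarith)
    have hY : ((n : ℝ) * α - 1) ^ (2 * k) ≤ 1 := by
      rw [pow_mul]
      exact pow_le_one₀ (sq_nonneg _) (by nlinarith)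
    have hY0 : (0 : ℝ) ≤ ((n : ℝ) * α - 1) ^ (2 * k) := by
      rw [pow_mul]; positivity
    nlinarith [mul_nonneg (mul_nonneg (by linarith : (0:ℝ) ≤ (n:ℝ) - 1)
      (by linarith : (0:ℝ) ≤ -((n:ℝ) * α - 1)))
      (by linarith : (0:ℝ) ≤ ((n:ℝ) - 1) ^ (2 * k) - ((n:ℝ) * α - 1) ^ (2 * k))]
  obtain ⟨⟨k1, k2, k3, k4⟩, k5⟩ := key ((n : ℝ) - 1) ((n : ℝ) * α - 1)
    (((n : ℝ) - 1) ^ δ) (((n : ℝ) * α - 1) ^ δ) hN ht0 ht1 hA hB0 hB1 hNB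
  have hC : 0 < ((n : ℝ) * α - 1) * ((n : ℝ) * α - 1) ^ δ := mul_pos_of_neg_of_neg ht0 hB0
  have hC1 : ((n : ℝ) * α - 1) * ((n : ℝ) * α - 1) ^ δ ≤ 1 := by
    nlinarith [mul_nonneg (by linarith : (0:ℝ) ≤ (n:ℝ) * α - 1 + 1)
      (by linarith : (0:ℝ) ≤ -(((n:ℝ) * α - 1) ^ δ))]
  have hE : 0 < ((n : ℝ) - 1) ^ δ + ((n : ℝ) * α - 1) * ((n : ℝ) * α - 1) ^ δ := by linarith
  have hD : 0 < ((n : ℝ) - 1) * ((n : ℝ) - 1) ^ δ -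
      ((n : ℝ) * α - 1) * ((n : ℝ) * α - 1) ^ δ := by nlinarith
  have e1 : sig1 n α δ = ((n : ℝ) * α - 1 + 1) *
      (((n : ℝ) - 1) ^ δ + ((n : ℝ) - 1) * ((n : ℝ) * α - 1) ^ δ) /
      (((n : ℝ) - 1 + 1) * (((n : ℝ) - 1) ^ δ +
        ((n : ℝ) * α - 1) * ((n : ℝ) * α - 1) ^ δ)) := by
    simp only [sig1]
    rw [pow_succ, div_eq_div_iff (by nlinarith [hE]) (by positivity)]
    ring
  have e2 : sig2 n α δ = ((n : ℝ) - 1 - ((n : ℝ) * α - 1)) *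
      (((n : ℝ) - 1) ^ δ + ((n : ℝ) - 1) * ((n : ℝ) * α - 1) ^ δ) /
      (((n : ℝ) - 1 + 1) * (((n : ℝ) - 1) * ((n : ℝ) - 1) ^ δ -
        ((n : ℝ) * α - 1) * ((n : ℝ) * α - 1) ^ δ)) := by
    simp only [sig2]
    rw [pow_succ, pow_succ, div_eq_div_iff (by nlinarith [hD]) (by positivity)]
    ring
  have e3 : sig3 n α δ = ((n : ℝ) * α - 1 + 1) *
      (((n : ℝ) - 1) * ((n : ℝ) - 1) ^ δ - ((n : ℝ) - 1) * ((n : ℝ) * α - 1) ^ δ) /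
      (((n : ℝ) - 1 + 1) * (((n : ℝ) - 1) * ((n : ℝ) - 1) ^ δ -
        ((n : ℝ) * α - 1) * ((n : ℝ) * α - 1) ^ δ)) := by
    simp only [sig3]
    rw [pow_succ, pow_succ, div_eq_div_iff (by nlinarith [hD]) (by positivity)]
    ring
  have e4 : sig4 n α δ = ((n : ℝ) - 1 - ((n : ℝ) * α - 1)) *
      (((n : ℝ) - 1) ^ δ - ((n : ℝ) * α - 1) ^ δ) /
      (((n : ℝ) - 1 + 1) * (((n : ℝ) - 1) * (((n : ℝ) - 1) ^ δ +
        ((n : ℝ) * α - 1) * ((n : ℝ) * α - 1) ^ δ))) := by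
    simp only [sig4]
    rw [pow_succ, div_eq_div_iff (by nlinarith [mul_pos (by linarith : (0:ℝ) < (n:ℝ)-1) hE])
      (by positivity)]
    ring
  have e5 : sig5 n α δ = ((n : ℝ) - 1 - ((n : ℝ) * α - 1)) *
      (((n : ℝ) - 1) ^ δ - ((n : ℝ) * α - 1) ^ δ) /
      (((n : ℝ) - 1 + 1) * (((n : ℝ) - 1) * ((n : ℝ) - 1) ^ δ -
        ((n : ℝ) * α - 1) * ((n : ℝ) * α - 1) ^ δ)) := by
    simp only [sig5]
    rw [pow_succ, pow_succ, div_eq_div_iff (by nlinarith [hD]) (by positivity)]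
    ring
  refine ⟨⟨?_, ?_, ?_, ?_⟩, ?_⟩
  · rw [ge_iff_le, e4, e5]; exact k1
  · rw [ge_iff_le, e2, e4]; exact k2
  · rw [ge_iff_le, e3, e2]; exact k3
  · rw [ge_iff_le, e1, e3]; exact k4
  · rw [e1, e3, e5]; linarith [k5]
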